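/- Suppose $X$ is a metric space, $\varrho$ is the intrinsic pseudometric on $X$ given by infima of lengths of continuous paths in $X$, $A_i$ is a sequence of open subsets of $X$ with compact closure satisfying $\overline{A_i} \subset A_{i+1}$ and $X = \bigcup_i A_i$, and $\varrho_i$ is the pseudometric on $A_i$ given by infima of lengths of continuous paths with values in $\overline{A_i}$ connecting points of $A_i$. Then $\varrho_{i+1}(a,x) \leq \varrho_i(a,x)$ whenever $a,x \in A_i$, and $\varrho_i(a,x) \to \varrho(a,x)$ as $i \to \infty$ for all $a,x \in X$. -/
import Mathlib


/-- for an exhaustion `A i` of `X` by open sets with compact closures, the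
intrinsic pseudometrics `ρ_i` obtained from paths with values in `closure (A i)` are
nonincreasing in `i` on `A i × A i` and converge pointwise to the intrinsic pseudometric
`ρ` of `X`. -/
theorem intrinsic_metric_exhaustion {X : Type*} [MetricSpace X]
    (ρ : X → X → ENNReal)
    (hρ : ∀ a x, ρ a x = ⨅ (g : ℝ → X) (_ : Continuous g) (s : ℝ) (t : ℝ) (_ : s ≤ t)
      (_ : g s = a) (_ : g t = x), eVariationOn g (Set.Icc s t))
    (A : ℕ → Set X) (hopen : ∀ i, IsOpen (A i)) (hcpt : ∀ i, IsCompact (closure (A i)))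
    (hmono : ∀ i, closure (A i) ⊆ A (i + 1)) (hcover : (⋃ i, A i) = Set.univ)
    (ρi : ℕ → X → X → ENNReal)
    (hρi : ∀ i a x, ρi i a x = ⨅ (g : ℝ → X) (_ : Continuous g)
      (_ : ∀ t, g t ∈ closure (A i)) (s : ℝ) (t : ℝ) (_ : s ≤ t) (_ : g s = a) (_ : g t = x),
      eVariationOn g (Set.Icc s t)) :
    (∀ i, ∀ a ∈ A i, ∀ x ∈ A i, ρi (i + 1) a x ≤ ρi i a x) ∧
    (∀ a x, Filter.Tendsto (fun i => ρi i a x) Filter.atTop (nhds (ρ a x))) := by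
  have hAmono : Monotone A := monotone_nat_of_le_succ fun i =>
    (subset_closure).trans (hmono i)
  have key : ∀ i a x, ρi (i + 1) a x ≤ ρi i a x := by
    intro i a x
    rw [hρi, hρi]
    refine le_iInf fun g => le_iInf fun hg => le_iInf fun hmem => le_iInf fun s =>
      le_iInf fun t => le_iInf fun hst => le_iInf fun hs => le_iInf fun ht => ?_
    have hmem' : ∀ u, g u ∈ closure (A (i + 1)) := fun u =>
      subset_closure (hmono i (hmem u))
    exact iInf_le_of_le g <| iInf_le_of_le hg <| iInf_le_of_le hmem' <| iInf_le_of_le s <|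
      iInf_le_of_le t <| iInf_le_of_le hst <| iInf_le_of_le hs <| iInf_le_of_le ht le_rfl
  refine ⟨fun i a _ x _ => key i a x, fun a x => ?_⟩
  have hanti : Antitone fun i => ρi i a x := antitone_nat_of_succ_le fun i => key i a x
  have hle : ∀ i, ρ a x ≤ ρi i a x := by
    intro i
    rw [hρ, hρi]
    refine le_iInf fun g => le_iInf fun hg => le_iInf fun _ => le_iInf fun s =>
      le_iInf fun t => le_iInf fun hst => le_iInf fun hs => le_iInf fun ht => ?_
    exact iInf_le_of_le g <| iInf_le_of_le hg <| iInf_le_of_le s <|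
      iInf_le_of_le t <| iInf_le_of_le hst <| iInf_le_of_le hs <| iInf_le_of_le ht le_rfl
  have hinf : (⨅ i, ρi i a x) = ρ a x := by
    refine le_antisymm ?_ (le_iInf hle)
    rw [hρ]
    refine le_iInf fun g => le_iInf fun hg => le_iInf fun s => le_iInf fun t =>
      le_iInf fun hst => le_iInf fun hs => le_iInf fun ht => ?_
    -- find N such that g '' Icc s t ⊆ A N
    have hK : IsCompact (g '' Set.Icc s t) := (isCompact_Icc).image hg
    obtain ⟨I, hI⟩ := hK.elim_finite_subcover A hopen
      (by rw [Set.iUnion_eq_univ_iff.mpr fun y => ?_]; · exact Set.subset_univ _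
          · have := Set.mem_univ y; rw [← hcover] at this; exact Set.mem_iUnion.mp this)
    set N := I.sup id with hN
    have hKN : g '' Set.Icc s t ⊆ A N := by
      refine hI.trans ?_
      refine Set.iUnion₂_subset fun j hj => hAmono (Finset.le_sup (f := id) hj)
    -- clamped path
    set g' : ℝ → X := fun u => g (Set.projIcc s t hst u) with hg'
    have hg'c : Continuous g' := hg.comp (continuous_subtype_val.comp continuous_projIcc)
    have heq : Set.EqOn g' g (Set.Icc s t) := fun u hu => by
      simp [hg', Set.projIcc_of_mem hst hu]
    have hmem' : ∀ u, g' u ∈ closure (A N) := fun u =>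
      subset_closure (hKN ⟨_, (Set.projIcc s t hst u).2, rfl⟩)
    have hvar : eVariationOn g' (Set.Icc s t) = eVariationOn g (Set.Icc s t) :=
      eVariationOn.eq_of_eqOn heq
    have hs' : g' s = a := by
      rw [hg']; simp only [Set.projIcc_left]; exact hs
    have ht' : g' t = x := by
      rw [hg']; simp only [Set.projIcc_right]; exact ht
    calc (⨅ i, ρi i a x) ≤ ρi N a x := iInf_le _ N
      _ ≤ eVariationOn g' (Set.Icc s t) := by
          rw [hρi]
          exact iInf_le_of_le g' <| iInf_le_of_le hg'c <| iInf_le_of_le hmem' <|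
            iInf_le_of_le s <| iInf_le_of_le t <| iInf_le_of_le hst <|
            iInf_le_of_le hs' <| iInf_le_of_le ht' le_rfl
      _ = eVariationOn g (Set.Icc s t) := hvar
  rw [← hinf]
  exact tendsto_atTop_iInf hanti
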